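/- arXiv:1504.04165 — 3 statements merged into one kernel-verified Lean document; each statement's English description precedes it below -/
import Mathlib

section
/- The function g(β) = 1/π + (1 - β/π)·cot(β) (with g(π) = 0) is nonnegative on (0, 2π). -/
open Real

noncomputable def g (β : ℝ) : ℝ :=
  if β = π then 0 else 1 / π + (1 - β / π) * Real.cot β

noncomputable def hfun (β : ℝ) : ℝ := Real.sin β + (π - β) * Real.cos β

lemma hfun_deriv (β : ℝ) : HasDerivAt hfun ((β - π) * Real.sin β) β := by
  have h2 : HasDerivAt (fun x => (π - x) * Real.cos x)
      ((0 - 1) * Real.cos β + (π - β) * (-Real.sin β)) β :=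
    ((hasDerivAt_const β π).sub (hasDerivAt_id β)).mul (Real.hasDerivAt_cos β)
  have h := (Real.hasDerivAt_sin β).add h2
  exact h.congr_deriv (by ring)

lemma hfun_anti : AntitoneOn hfun (Set.Icc 0 (2 * π)) := by
  apply antitoneOn_of_deriv_nonpos (convex_Icc _ _)
  · exact (Real.continuous_sin.add
      ((continuous_const.sub continuous_id).mul Real.continuous_cos)).continuousOn
  · intro x _
    exact (hfun_deriv x).differentiableAt.differentiableWithinAt
  · intro x hx
    rw [(hfun_deriv x).deriv]
    rw [interior_Icc] at hx
    rcases le_or_gt x π with h | h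
    · have hs : 0 ≤ Real.sin x := Real.sin_nonneg_of_nonneg_of_le_pi (le_of_lt hx.1) h
      nlinarith
    · have hs : Real.sin x ≤ 0 := by
        have h1 : 0 ≤ Real.sin (x - π) := by
          apply Real.sin_nonneg_of_nonneg_of_le_pi <;> nlinarith [hx.2]
        rw [Real.sin_sub_pi] at h1
        linarith
      nlinarith

lemma hfun_pi : hfun π = 0 := by simp [hfun]

theorem g_nonneg : ∀ β ∈ Set.Ioo (0 : ℝ) (2 * π), 0 ≤ g β := by
  intro β hβ
  obtain ⟨hb0, hb2⟩ := hβ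
  have hpi := Real.pi_pos
  by_cases hβπ : β = π
  · simp [g, hβπ]
  · rw [g, if_neg hβπ, Real.cot_eq_cos_div_sin]
    rcases lt_or_gt_of_ne hβπ with h | h
    · have hsin : 0 < Real.sin β := Real.sin_pos_of_pos_of_lt_pi hb0 h
      have heq : 1 / π + (1 - β / π) * (Real.cos β / Real.sin β) = hfun β / (π * Real.sin β) := by
        rw [hfun]; field_simp
      rw [heq]
      apply div_nonneg _ (by positivity)
      have := hfun_anti (Set.mem_Icc.2 ⟨le_of_lt hb0, le_of_lt hb2⟩)
        (Set.mem_Icc.2 ⟨le_of_lt hpi, by linarith⟩) (le_of_lt h)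
      rw [hfun_pi] at this
      exact this
    · have hsin : Real.sin β < 0 := by
        have h1 : 0 < Real.sin (β - π) := by
          apply Real.sin_pos_of_pos_of_lt_pi <;> linarith
        rw [Real.sin_sub_pi] at h1
        linarith
      have hsne : Real.sin β ≠ 0 := ne_of_lt hsin
      have heq : 1 / π + (1 - β / π) * (Real.cos β / Real.sin β) = hfun β / (π * Real.sin β) := by
        rw [hfun]; field_simp
      rw [heq]
      apply div_nonneg_iff.2
      right
      constructor
      · have := hfun_anti (Set.mem_Icc.2 ⟨le_of_lt hpi, by linarith⟩)
          (Set.mem_Icc.2 ⟨le_of_lt hb0, le_of_lt hb2⟩) (le_of_lt h)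
        rw [hfun_pi] at this
        exact this
      · nlinarith
end

section
/- The function g(β) = 1/π + (1 - β/π)·cot(β) (with g(π) = 0) is decreasing on (0, π]. -/
open Real

lemma sin_sub_mul_cos_pos {s : ℝ} (hs : s ∈ Set.Ioo 0 π) : 0 < Real.sin s - s * Real.cos s := by
  have hsin : 0 < Real.sin s := Real.sin_pos_of_pos_of_lt_pi hs.1 hs.2
  rcases le_or_gt (Real.cos s) 0 with h | h
  · nlinarith [hs.1]
  · have hlt : s < π / 2 := by
      by_contra hge
      exact absurd (Real.cos_nonpos_of_pi_div_two_le_of_le (le_of_not_gt hge)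
        (by linarith [hs.2, Real.pi_pos])) (not_le.mpr h)
    have := Real.lt_tan hs.1 hlt
    rw [Real.tan_eq_sin_div_cos, lt_div_iff₀ h] at this
    linarith

lemma numA_pos {x : ℝ} (hx : x ∈ Set.Ioo 0 π) : 0 < Real.sin x + (π - x) * Real.cos x := by
  have h := sin_sub_mul_cos_pos (s := π - x) ⟨by linarith [hx.2], by linarith [hx.1]⟩
  rw [Real.sin_pi_sub, Real.cos_pi_sub] at h
  linarith

lemma g_pos_on_Ioo {x : ℝ} (hx : x ∈ Set.Ioo 0 π) : 0 < g x := by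
  have hxne : x ≠ π := ne_of_lt hx.2
  have hsin : 0 < Real.sin x := Real.sin_pos_of_pos_of_lt_pi hx.1 hx.2
  have hpi := Real.pi_pos
  have hnum := numA_pos hx
  rw [g, if_neg hxne, Real.cot_eq_cos_div_sin]
  have : 1 / π + (1 - x / π) * (Real.cos x / Real.sin x)
      = (Real.sin x + (π - x) * Real.cos x) / (π * Real.sin x) := by
    field_simp
  rw [this]
  positivity

lemma numC_pos {x : ℝ} (hx : x ∈ Set.Ioo 0 π) : 0 < Real.sin x * Real.cos x + (π - x) := by
  have h1 : Real.sin (2 * (π - x)) < 2 * (π - x) := Real.sin_lt (by linarith [hx.2])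
  have h2 : Real.sin (2 * (π - x)) = 2 * Real.sin (π - x) * Real.cos (π - x) := by
    rw [Real.sin_two_mul]
  rw [h2, Real.sin_pi_sub, Real.cos_pi_sub] at h1
  nlinarith

lemma hasDerivAt_f {β : ℝ} (hβ : β ∈ Set.Ioo 0 π) :
    HasDerivAt (fun x => 1 / π + (1 - x / π) * (Real.cos x / Real.sin x))
      (-(Real.sin β * Real.cos β + (π - β)) / (π * Real.sin β ^ 2)) β := by
  have hs : Real.sin β ≠ 0 := ne_of_gt (Real.sin_pos_of_pos_of_lt_pi hβ.1 hβ.2)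
  have hpi : (π : ℝ) ≠ 0 := ne_of_gt Real.pi_pos
  have h1 : HasDerivAt (fun x : ℝ => 1 - x / π) (-(1 / π)) β := by
    simpa using ((hasDerivAt_id β).div_const π).const_sub 1
  have h2 : HasDerivAt (fun x => Real.cos x / Real.sin x)
      ((-Real.sin β * Real.sin β - Real.cos β * Real.cos β) / (Real.sin β) ^ 2) β :=
    (Real.hasDerivAt_cos β).div (Real.hasDerivAt_sin β) hs
  have hpyth := Real.sin_sq_add_cos_sq β
  rw [show -Real.sin β * Real.sin β - Real.cos β * Real.cos β = -1 by nlinarith [hpyth]] at h2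
  have h := (h1.mul h2).const_add (1 / π)
  refine h.congr_deriv ?_
  field_simp
  ring

lemma strictAntiOn_f : StrictAntiOn (fun x => 1 / π + (1 - x / π) * (Real.cos x / Real.sin x))
    (Set.Ioo (0 : ℝ) π) := by
  apply strictAntiOn_of_deriv_neg (convex_Ioo 0 π)
  · intro x hx
    exact (hasDerivAt_f hx).continuousAt.continuousWithinAt
  · intro x hx
    rw [interior_Ioo] at hx
    rw [(hasDerivAt_f hx).deriv]
    have hsin : 0 < Real.sin x := Real.sin_pos_of_pos_of_lt_pi hx.1 hx.2
    have hnum := numC_pos hx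
    have hpi := Real.pi_pos
    apply div_neg_of_neg_of_pos
    · linarith
    · positivity

theorem g_strictAntiOn : StrictAntiOn g (Set.Ioc (0 : ℝ) π) := by
  intro x hx y hy hxy
  rcases eq_or_lt_of_le hy.2 with hyp | hyp
  · rw [hyp, g, if_pos rfl]
    exact g_pos_on_Ioo ⟨hx.1, lt_of_lt_of_le hxy (hyp ▸ le_refl _)⟩
  · have hxI : x ∈ Set.Ioo 0 π := ⟨hx.1, lt_trans hxy hyp⟩
    have hyI : y ∈ Set.Ioo 0 π := ⟨hy.1, hyp⟩
    have hgx : g x = 1 / π + (1 - x / π) * (Real.cos x / Real.sin x) := by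
      rw [g, if_neg (ne_of_lt hxI.2), Real.cot_eq_cos_div_sin]
    have hgy : g y = 1 / π + (1 - y / π) * (Real.cos y / Real.sin y) := by
      rw [g, if_neg (ne_of_lt hyI.2), Real.cot_eq_cos_div_sin]
    rw [hgx, hgy]
    exact strictAntiOn_f hxI hyI hxy
end

section
/- Let H = {(x₁,x₂) ∈ ℝ² : x₁ > 0} be a half-plane and S = (0,h) × (0,L) a rectangle in H. Then ∫_S ∫_H p(x,y;t) dy dx = hL − (L/√π)·t^{1/2} + R(t), where |R(t)| ≤ C e^{−h²/(8t)} t^{1/2} for some constant C and all small t > 0. -/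
open Real MeasureTheory Set Filter

noncomputable def heatKernel2 (x y : EuclideanSpace ℝ (Fin 2)) (t : ℝ) : ℝ :=
  (4 * π * t)⁻¹ * Real.exp (-dist x y ^ 2 / (4 * t))

namespace RectHeat

/-- The 1D Gaussian `exp (-ζ²/(4t))`. -/
noncomputable def gk (t ζ : ℝ) : ℝ := Real.exp (-(4*t)⁻¹ * ζ^2)

/-- Tail integral of the 1D Gaussian. -/
noncomputable def Phi (t a : ℝ) : ℝ := ∫ ζ in Ioi a, gk t ζ

variable {t : ℝ}

lemma gk_nonneg (t ζ : ℝ) : 0 ≤ gk t ζ := (exp_pos _).le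

lemma binv_pos (ht : 0 < t) : 0 < (4*t)⁻¹ := by positivity

lemma gk_integrable (ht : 0 < t) : Integrable (gk t) :=
  integrable_exp_neg_mul_sq (binv_pos ht)

lemma gk_continuous (t : ℝ) : Continuous (gk t) := by
  unfold gk; fun_prop

lemma gk_total (ht : 0 < t) : ∫ ζ, gk t ζ = Real.sqrt (4*π*t) := by
  unfold gk
  rw [integral_gaussian]
  congr 1
  field_simp

lemma gk_hasDerivAt (t a : ℝ) :
    HasDerivAt (gk t) (-(2*(4*t)⁻¹*a) * gk t a) a := by
  have h1 : HasDerivAt (fun x : ℝ => -(4*t)⁻¹ * x^2) (-(4*t)⁻¹ * (2*a)) a := by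
    simpa using (hasDerivAt_pow 2 a).const_mul (-(4*t)⁻¹)
  have h2 := h1.exp
  convert h2 using 1
  unfold gk
  ring
  unfold gk
  ring

lemma gk_tail (ht : 0 < t) (c : ℝ) :
    ∫ ζ in Ioi c, ζ * gk t ζ = 2*t * gk t c := by
  have hderiv : ∀ x ∈ Ici c, HasDerivAt (fun x => -(2*t) * gk t x) (x * gk t x) x := by
    intro x _
    have := (gk_hasDerivAt t x).const_mul (-(2*t))
    refine this.congr_deriv ?_
    field_simp [ht.ne']
    ring
  have hint : IntegrableOn (fun x : ℝ => x * gk t x) (Ioi c) :=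
    ((integrable_mul_exp_neg_mul_sq (binv_pos ht)).integrableOn)
  have htend : Tendsto (fun x => -(2*t) * gk t x) atTop (nhds 0) := by
    have h2 : Tendsto (fun x : ℝ => -(4*t)⁻¹ * x^2) atTop atBot := by
      apply Tendsto.const_mul_atTop_of_neg (neg_lt_zero.mpr (binv_pos ht))
      exact tendsto_pow_atTop two_ne_zero
    have h3 : Tendsto (gk t) atTop (nhds 0) := Real.tendsto_exp_atBot.comp h2
    have h4 := h3.const_mul (-(2*t))
    simpa using h4
  have := integral_Ioi_of_hasDerivAt_of_tendsto' hderiv hint htend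
  rw [this]; ring

lemma Phi_nonneg (t a : ℝ) : 0 ≤ Phi t a :=
  setIntegral_nonneg measurableSet_Ioi fun ζ _ => gk_nonneg t ζ

lemma Phi_add_Iic (ht : 0 < t) (a : ℝ) :
    (∫ ζ in Iic a, gk t ζ) + Phi t a = Real.sqrt (4*π*t) := by
  rw [Phi, intervalIntegral.integral_Iic_add_Ioi (gk_integrable ht).integrableOn
    (gk_integrable ht).integrableOn, gk_total ht]

lemma Phi_eq (ht : 0 < t) (a : ℝ) :
    Phi t a = Phi t 0 - ∫ ζ in (0:ℝ)..a, gk t ζ := by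
  have h1 := Phi_add_Iic ht a
  have h2 := Phi_add_Iic ht 0
  have h3 := intervalIntegral.integral_Iic_sub_Iic
    (gk_integrable ht).integrableOn (gk_integrable ht).integrableOn
    (a := 0) (b := a)
  linarith

lemma Phi_hasDerivAt (ht : 0 < t) (a : ℝ) : HasDerivAt (Phi t) (-gk t a) a := by
  have h1 : HasDerivAt (fun x => ∫ ζ in (0:ℝ)..x, gk t ζ) (gk t a) a :=
    intervalIntegral.integral_hasDerivAt_right
      ((gk_continuous t).intervalIntegrable 0 a)
      ((gk_continuous t).stronglyMeasurableAtFilter _ _)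
      (gk_continuous t).continuousAt
  have h2 := h1.const_sub (Phi t 0)
  have h3 : Phi t = fun x => Phi t 0 - ∫ ζ in (0:ℝ)..x, gk t ζ := funext (Phi_eq ht)
  rw [h3]
  exact h2

lemma Phi_continuous (ht : 0 < t) : Continuous (Phi t) :=
  continuous_iff_continuousAt.2 fun a => (Phi_hasDerivAt ht a).continuousAt

lemma integral_Phi (ht : 0 < t) (h : ℝ) :
    ∫ a in (0:ℝ)..h, Phi t a = h * Phi t h - 2*t*gk t h + 2*t := by
  have hA : ∀ a ∈ uIcc (0:ℝ) h,
      HasDerivAt (fun a => a * Phi t a - 2*t*gk t a) (Phi t a) a := by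
    intro a _
    have h1 := (hasDerivAt_id a).mul (Phi_hasDerivAt ht a)
    have h2 := (gk_hasDerivAt t a).const_mul (2*t)
    have h3 := h1.sub h2
    refine h3.congr_deriv ?_
    simp only [id]
    field_simp [ht.ne']
    ring
  have hint : IntervalIntegrable (Phi t) volume 0 h :=
    (Phi_continuous ht).intervalIntegrable _ _
  rw [intervalIntegral.integral_eq_sub_of_hasDerivAt hA hint,
    show gk t 0 = 1 by simp [gk]]
  ring_nf

lemma hPhi_le (ht : 0 < t) {h : ℝ} (hh : 0 < h) : h * Phi t h ≤ 2*t * gk t h := by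
  have heq : (fun ζ : ℝ => (ζ/h) * gk t ζ) = fun ζ => (1/h) * (ζ * gk t ζ) :=
    funext fun ζ => by ring
  have h1 : Phi t h ≤ ∫ ζ in Ioi h, (ζ/h) * gk t ζ := by
    apply setIntegral_mono_on (gk_integrable ht).integrableOn _ measurableSet_Ioi
    · intro ζ hζ
      have h2 : 1 ≤ ζ/h := (one_le_div hh).2 (le_of_lt hζ)
      exact le_mul_of_one_le_left (gk_nonneg t ζ) h2
    · rw [heq]
      exact ((integrable_mul_exp_neg_mul_sq (binv_pos ht)).const_mul _).integrableOn
  have h2 : ∫ ζ in Ioi h, (ζ/h) * gk t ζ = (1/h) * (2*t*gk t h) := by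
    rw [heq, integral_const_mul, gk_tail ht]
  calc h * Phi t h ≤ h * ((1/h) * (2*t*gk t h)) :=
        mul_le_mul_of_nonneg_left (h1.trans_eq h2) hh.le
    _ = 2*t*gk t h := by field_simp

/-! ### 2D reductions -/

noncomputable def em : EuclideanSpace ℝ (Fin 2) ≃ᵐ ℝ × ℝ :=
  (MeasurableEquiv.toLp 2 (Fin 2 → ℝ)).symm.trans MeasurableEquiv.finTwoArrow

lemma em_mp : MeasurePreserving em :=
  (volume_preserving_finTwoArrow ℝ).comp
    (EuclideanSpace.volume_preserving_symm_measurableEquiv_toLp (Fin 2))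

lemma transfer (s : Set (ℝ × ℝ)) (f : ℝ × ℝ → ℝ) :
    ∫ x in {x : EuclideanSpace ℝ (Fin 2) | (x 0, x 1) ∈ s}, f (x 0, x 1)
      = ∫ p in s, f p := by
  rw [← em_mp.map_eq, setIntegral_map_equiv]
  rfl

lemma shift_Iic (f : ℝ → ℝ) (a c : ℝ) :
    ∫ x in Iic c, f (a + x) = ∫ x in Iic (a + c), f x := by
  have A : MeasurableEmbedding (fun x : ℝ => a + x) :=
    (Homeomorph.addLeft a).measurableEmbedding
  have B := (measurePreserving_add_left (volume : Measure ℝ) a).setIntegral_preimage_emb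
    A f (Iic (a + c))
  rw [← B]
  congr 1
  ext x
  simp

lemma J_eq (ht : 0 < t) (a : ℝ) :
    ∫ u in Ioi (0:ℝ), gk t (a - u) = Real.sqrt (4*π*t) - Phi t a := by
  have h1 : ∫ u in Ioi (0:ℝ), gk t (a - u) = ∫ ζ in Iic (-0:ℝ), gk t (a + ζ) := by
    rw [← integral_comp_neg_Ioi]
    simp only [← sub_eq_add_neg]
  rw [h1, neg_zero, shift_Iic (gk t) a 0, add_zero]
  have := Phi_add_Iic ht a
  linarith

lemma inner_eq (ht : 0 < t) (x : EuclideanSpace ℝ (Fin 2)) :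
    ∫ y in {y : EuclideanSpace ℝ (Fin 2) | 0 < y 0}, heatKernel2 x y t
      = (4*π*t)⁻¹ * (Real.sqrt (4*π*t) - Phi t (x 0)) * Real.sqrt (4*π*t) := by
  have hker : ∀ y : EuclideanSpace ℝ (Fin 2),
      heatKernel2 x y t = (4*π*t)⁻¹ * gk t (x 0 - y 0) * gk t (x 1 - y 1) := by
    intro y
    unfold heatKernel2 gk
    have hexp : ∀ A B : ℝ, Real.exp (-(A + B) / (4*t)) =
        Real.exp (-(4*t)⁻¹*A) * Real.exp (-(4*t)⁻¹*B) := by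
      intro A B
      rw [← Real.exp_add]
      congr 1
      field_simp
      ring
    rw [EuclideanSpace.dist_eq, Real.sq_sqrt (Finset.sum_nonneg fun i _ => sq_nonneg _),
      Fin.sum_univ_two, Real.dist_eq, Real.dist_eq, sq_abs, sq_abs, hexp]
    ring
  have htr := transfer ((Ioi (0:ℝ)) ×ˢ (univ : Set ℝ))
    (fun p : ℝ × ℝ => (4*π*t)⁻¹ * gk t (x 0 - p.1) * gk t (x 1 - p.2))
  simp only [Set.mem_prod, Set.mem_univ, and_true, Set.mem_Ioi] at htr
  simp only [hker]
  rw [htr, Measure.volume_eq_prod,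
    setIntegral_prod_mul (fun u => (4*π*t)⁻¹ * gk t (x 0 - u)) (fun v => gk t (x 1 - v)),
    Measure.restrict_univ, integral_sub_left_eq_self (gk t) (volume) (x 1),
    gk_total ht, integral_const_mul, J_eq ht]

end RectHeat

open RectHeat

theorem rectangle_heat_content (h L : ℝ) (hh : 0 < h) (hL : 0 < L) :
    let H : Set (EuclideanSpace ℝ (Fin 2)) := {x | 0 < x 0}
    let S : Set (EuclideanSpace ℝ (Fin 2)) :=
      {x | x 0 ∈ Set.Ioo 0 h ∧ x 1 ∈ Set.Ioo 0 L}
    ∃ C T : ℝ, 0 < T ∧ ∀ t ∈ Set.Ioo (0 : ℝ) T,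
      |(∫ x in S, ∫ y in H, heatKernel2 x y t) - (h * L - (L / Real.sqrt π) * Real.sqrt t)| ≤
        C * Real.exp (-h ^ 2 / (8 * t)) * Real.sqrt t := by
  intro H S
  refine ⟨L / Real.sqrt π, 1, one_pos, ?_⟩
  rintro t ⟨ht, -⟩
  have hπ := Real.pi_pos
  set c := Real.sqrt (4*π*t) with hc
  have hcpos : 0 < c := Real.sqrt_pos.2 (by positivity)
  have hc2 : c^2 = 4*π*t := Real.sq_sqrt (by positivity)
  -- the set S as a preimage
  have hSset : S = {x : EuclideanSpace ℝ (Fin 2) | (x 0, x 1) ∈ (Ioo (0:ℝ) h) ×ˢ (Ioo (0:ℝ) L)} := by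
    ext x
    simp [S, Set.mem_prod]
  have hSm : MeasurableSet S := by
    rw [hSset]
    exact em.measurable (measurableSet_Ioo.prod measurableSet_Ioo)
  -- compute the double integral
  have step1 : (∫ x in S, ∫ y in H, heatKernel2 x y t)
      = ∫ x in S, (fun p : ℝ × ℝ => (4*π*t)⁻¹ * (c - Phi t p.1) * c) (x 0, x 1) :=
    setIntegral_congr_fun hSm (fun x _ => inner_eq ht x)
  have step2 : (∫ x in S, (fun p : ℝ × ℝ => (4*π*t)⁻¹ * (c - Phi t p.1) * c) (x 0, x 1))
      = ∫ p in (Ioo (0:ℝ) h) ×ˢ (Ioo (0:ℝ) L),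
          (fun p : ℝ × ℝ => (4*π*t)⁻¹ * (c - Phi t p.1) * c) p := by
    rw [hSset]
    exact transfer ((Ioo (0:ℝ) h) ×ˢ (Ioo (0:ℝ) L))
      (fun p : ℝ × ℝ => (4*π*t)⁻¹ * (c - Phi t p.1) * c)
  have step3 : (∫ p in (Ioo (0:ℝ) h) ×ˢ (Ioo (0:ℝ) L),
        (fun p : ℝ × ℝ => (4*π*t)⁻¹ * (c - Phi t p.1) * c) p)
      = (∫ a in Ioo (0:ℝ) h, (4*π*t)⁻¹ * (c - Phi t a)) * (∫ _ in Ioo (0:ℝ) L, c) := by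
    rw [Measure.volume_eq_prod, setIntegral_prod_mul (fun a => (4*π*t)⁻¹ * (c - Phi t a)) (fun _ => c)]
  have hIL : (∫ _ in Ioo (0:ℝ) L, c) = L * c := by
    simp [Real.volume_Ioo, ENNReal.toReal_ofReal hL.le, hL.le]
  have hIh : (∫ a in Ioo (0:ℝ) h, (4*π*t)⁻¹ * (c - Phi t a))
      = (4*π*t)⁻¹ * (h * c - (h * Phi t h - 2*t*gk t h + 2*t)) := by
    rw [← integral_Ioc_eq_integral_Ioo, ← intervalIntegral.integral_of_le hh.le,
      intervalIntegral.integral_const_mul]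
    congr 1
    rw [intervalIntegral.integral_sub (intervalIntegrable_const)
      ((Phi_continuous ht).intervalIntegrable _ _),
      intervalIntegral.integral_const, integral_Phi ht]
    simp
  set E := h * Phi t h - 2*t*gk t h with hE
  have hc0 : c ≠ 0 := ne_of_gt hcpos
  have h4πt : (4*π*t) ≠ 0 := by positivity
  have hcval : c = 2*Real.sqrt π*Real.sqrt t := by
    rw [hc, show (4:ℝ)*π*t = (2*Real.sqrt π*Real.sqrt t)^2 by
      rw [mul_pow, mul_pow, Real.sq_sqrt hπ.le, Real.sq_sqrt ht.le]; ring,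
      Real.sqrt_sq (by positivity)]
  have hst : Real.sqrt t * Real.sqrt t = t := Real.mul_self_sqrt ht.le
  have h2tc : 2*t/c = Real.sqrt t/Real.sqrt π := by
    rw [hcval, div_eq_div_iff (by positivity) (by positivity)]
    linear_combination (-2*Real.sqrt π) * hst
  have hval : (∫ x in S, ∫ y in H, heatKernel2 x y t)
      = h * L - (L / Real.sqrt π) * Real.sqrt t - (L / c) * E := by
    rw [step1, step2, step3, hIL, hIh, ← hc2,
      show (L / Real.sqrt π) * Real.sqrt t = L * (2*t/c) by rw [h2tc]; ring]
    field_simp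
    ring
  rw [hval]
  rw [show h * L - (L / Real.sqrt π) * Real.sqrt t - (L / c) * E
      - (h * L - (L / Real.sqrt π) * Real.sqrt t) = -((L/c) * E) by ring, abs_neg]
  have hgkle : gk t h ≤ Real.exp (-h ^ 2 / (8 * t)) := by
    apply Real.exp_le_exp.2
    rw [neg_mul, neg_div, neg_le_neg_iff, inv_mul_eq_div]
    gcongr
    norm_num
  have hEbound : |E| ≤ 2*t * Real.exp (-h ^ 2 / (8 * t)) := by
    rw [hE, abs_le]
    have h1 : 0 ≤ h * Phi t h := mul_nonneg hh.le (Phi_nonneg t h)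
    have h2 := hPhi_le ht hh
    have h3 : 0 ≤ 2*t*gk t h := mul_nonneg (by positivity) (gk_nonneg t h)
    have h4 : 2*t*gk t h ≤ 2*t * Real.exp (-h ^ 2 / (8 * t)) := by
      have := mul_le_mul_of_nonneg_left hgkle (by positivity : (0:ℝ) ≤ 2*t)
      linarith
    constructor <;> nlinarith
  have habs : |(L/c) * E| = (L/c) * |E| := by
    rw [abs_mul, abs_of_nonneg (by positivity : (0:ℝ) ≤ L/c)]
  rw [habs]
  have hfin : (L/c) * (2*t * Real.exp (-h ^ 2 / (8 * t)))
      = L / Real.sqrt π * Real.exp (-h ^ 2 / (8 * t)) * Real.sqrt t := by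
    rw [show (L/c) * (2*t * Real.exp (-h ^ 2 / (8 * t)))
        = L * (2*t/c) * Real.exp (-h ^ 2 / (8 * t)) by ring, h2tc]
    ring
  calc (L/c) * |E| ≤ (L/c) * (2*t * Real.exp (-h ^ 2 / (8 * t))) := by
        apply mul_le_mul_of_nonneg_left hEbound (by positivity)
    _ = _ := hfin
end
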